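/- Let π be a group, ρ : π → π a group homomorphism, and k ≥ 1 an integer. Define the relation R on Fin k → π by: R x y iff there exists g : Fin k → π with y_i = g_i · x_i · (ρ(g_{i+1}))⁻¹ for all i (indices mod k), and define ρ^k-twisted conjugacy on π by: y ∼ z iff z = g · y · (ρ^k(g))⁻¹ for some g ∈ π. Then for all tuples x, y : Fin k → π one has R x y if and only if Φ(x) and Φ(y) are ρ^k-twisted conjugate, where Φ(x) = x_0 · ρ(x_1) · ρ²(x_2) ⋯ ρ^{k−1}(x_{k−1}); moreover Φ is surjective onto π. Consequently Φ induces a bijection from the quotient of (Fin k → π) by R onto the quotient of π by ρ^k-twisted conjugacy. -/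

import Mathlib

/-- The relation `R x y ↔ ∃ g, ∀ i, y_i = g_i · x_i · (ρ(g_{i+1}))⁻¹` (indices mod `k`). -/
def tupleRel {π : Type*} [Group π] {k : ℕ} [NeZero k] (ρ : π →* π)
    (x y : Fin k → π) : Prop :=
  ∃ g : Fin k → π, ∀ i : Fin k, y i = g i * x i * (ρ (g (i + 1)))⁻¹

/-- The twisted product `Φ(x) = x_0 · ρ(x_1) · ρ²(x_2) ⋯ ρ^{k−1}(x_{k−1})`. -/
def twistedProd {π : Type*} [Group π] {k : ℕ} (ρ : π →* π) (x : Fin k → π) : π :=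
  (List.ofFn (fun i : Fin k => (⇑ρ)^[(i : ℕ)] (x i))).prod

/-- `ρ^k`-twisted conjugacy: `y ∼ z` iff `z = g · y · (ρ^k(g))⁻¹` for some `g`. -/
def twistedConj {π : Type*} [Group π] (ρ : π →* π) (k : ℕ) (y z : π) : Prop :=
  ∃ g : π, z = g * y * ((⇑ρ)^[k] g)⁻¹

section Aux

open Fin.NatCast

variable {π : Type*} [Group π] {k : ℕ} [NeZero k] (ρ : π →* π)

private lemma telescope (A C : ℕ → π) (n : ℕ) :
    ((List.range n).map (fun i => A i * C i * (A (i + 1))⁻¹)).prod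
      = A 0 * ((List.range n).map C).prod * (A n)⁻¹ := by
  induction n with
  | zero => simp
  | succ n ih =>
    rw [List.range_succ, List.map_append, List.prod_append, ih, List.map_append,
      List.prod_append]
    simp only [List.map_cons, List.map_nil, List.prod_cons, List.prod_nil]
    group

private lemma twistedProd_eq (x : Fin k → π) :
    twistedProd ρ x = ((List.range k).map (fun n => (⇑ρ)^[n] (x ↑n))).prod := by
  unfold twistedProd
  congr 1
  apply List.ext_getElem
  · simp
  · intro i h1 h2
    simp only [List.getElem_ofFn, List.getElem_map, List.getElem_range]
    simp only [List.length_ofFn] at h1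
    have : (↑i : Fin k) = ⟨i, h1⟩ := Fin.ext (Fin.val_cast_of_lt h1)
    rw [this]

/-- tail twisted product from index `n` on. -/
private def tailQ (x : Fin k → π) (n : ℕ) : π :=
  ((List.range (k - n)).map (fun j => (⇑ρ)^[j] (x ↑(n + j)))).prod

private lemma tailQ_k (x : Fin k → π) : tailQ ρ x k = 1 := by
  simp [tailQ]

private lemma tailQ_rec (x : Fin k → π) {n : ℕ} (hn : n < k) :
    tailQ ρ x n = x ↑n * ρ (tailQ ρ x (n + 1)) := by
  unfold tailQ
  have h : k - n = (k - (n + 1)) + 1 := by omega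
  rw [h, List.range_succ_eq_map, List.map_cons, List.prod_cons, map_list_prod, List.map_map,
    List.map_map]
  have hlist : ∀ j ∈ List.range (k - (n + 1)),
      ((fun j => (⇑ρ)^[j] (x ↑(n + j))) ∘ Nat.succ) j
        = (⇑ρ ∘ fun j => (⇑ρ)^[j] (x ↑(n + 1 + j))) j := by
    intro j hj
    have e : n + Nat.succ j = n + 1 + j := by omega
    simp only [Function.comp_apply, e, Nat.succ_eq_add_one, Function.iterate_succ_apply']
  rw [List.map_congr_left hlist]
  simp

private lemma tailQ_zero (x : Fin k → π) : tailQ ρ x 0 = twistedProd ρ x := by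
  rw [twistedProd_eq]
  unfold tailQ
  simp

/-- forward direction core computation -/
private lemma fwd {x y g : Fin k → π} (h : ∀ i : Fin k, y i = g i * x i * (ρ (g (i + 1)))⁻¹) :
    twistedProd ρ y = g 0 * twistedProd ρ x * ((⇑ρ)^[k] (g 0))⁻¹ := by
  have key : ((List.range k).map (fun n => (⇑ρ)^[n] (y ↑n))).prod
      = ((List.range k).map (fun n =>
          (⇑ρ)^[n] (g ↑n) * (⇑ρ)^[n] (x ↑n) * ((⇑ρ)^[n+1] (g ↑(n+1)))⁻¹)).prod := by
    congr 1
    apply List.map_congr_left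
    intro n hn
    rw [h ↑n, iterate_map_mul, iterate_map_mul, iterate_map_inv,
      ← Function.iterate_succ_apply ρ n]
    congr 3
    push_cast
    ring
  rw [twistedProd_eq, twistedProd_eq, key,
    telescope (fun n => (⇑ρ)^[n] (g ↑n)) (fun n => (⇑ρ)^[n] (x ↑n)) k]
  simp [Fin.natCast_self]

/-- the concentrated tuple `(a, 1, 1, …, 1)`. -/
private def delta (a : π) : Fin k → π := fun i => if i = 0 then a else 1

private lemma rel_delta (x : Fin k → π) : tupleRel ρ x (delta (twistedProd ρ x) : Fin k → π) := by
  refine ⟨fun i => if i = 0 then 1 else (tailQ ρ x i.val)⁻¹, fun i => ?_⟩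
  have hg1 : ∀ i : Fin k, (if (i : Fin k) + 1 = 0 then (1:π) else (tailQ ρ x ((i+1) : Fin k).val)⁻¹)
      = (tailQ ρ x (i.val + 1))⁻¹ := by
    intro i
    by_cases hlast : i.val + 1 = k
    · have h0 : (i + 1 : Fin k) = 0 := by
        ext
        rw [Fin.add_def]
        simp [hlast]
      rw [if_pos h0, hlast, tailQ_k, inv_one]
    · have hval : ((i + 1 : Fin k)).val = i.val + 1 := by
        have hlt := i.isLt
        have hk2 : 2 ≤ k := by omega
        rw [Fin.add_def]
        simp only [Fin.val_one']
        rw [Nat.mod_eq_of_lt (show 1 < k by omega), Nat.mod_eq_of_lt (by omega)]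
      have h0 : (i + 1 : Fin k) ≠ 0 := by
        intro h
        rw [h] at hval
        simp at hval
      rw [if_neg h0, hval]
  by_cases hi : i = 0
  · subst hi
    simp only [delta, if_pos rfl, hg1, one_mul, map_inv, inv_inv]
    have hrec := tailQ_rec ρ x (n := 0) (Nat.pos_of_ne_zero (NeZero.ne k))
    rw [← tailQ_zero ρ x, hrec]
    simp
  · simp only [delta, if_neg hi, hg1, map_inv, inv_inv]
    have hvlt : i.val < k := i.isLt
    have hrec := tailQ_rec ρ x hvlt
    rw [Fin.cast_val_eq_self i] at hrec
    rw [hrec]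
    group

private lemma prod_delta (a : π) : twistedProd ρ (delta a : Fin k → π) = a := by
  have h0 := tailQ_zero ρ (delta a : Fin k → π)
  have hrec := tailQ_rec ρ (delta a : Fin k → π) (n := 0) (Nat.pos_of_ne_zero (NeZero.ne k))
  norm_num at hrec
  have h1 : tailQ ρ (delta a : Fin k → π) 1 = 1 := by
    unfold tailQ
    apply List.prod_eq_one
    intro t ht
    simp only [List.mem_map, List.mem_range] at ht
    obtain ⟨j, hj, rfl⟩ := ht
    have hne : ((1 + j : ℕ) : Fin k) ≠ 0 := by
      intro h
      have h2 := congrArg Fin.val h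
      rw [Fin.val_cast_of_lt (by omega)] at h2
      simp at h2
    simp only [delta]
    rw [if_neg hne, iterate_map_one]
  rw [← h0, hrec, h1, map_one, mul_one]
  simp [delta]

private lemma delta_conj {a b : π} (h : twistedConj ρ k a b) :
    tupleRel ρ (delta a : Fin k → π) (delta b) := by
  obtain ⟨c, rfl⟩ := h
  have hk : 0 < k := Nat.pos_of_ne_zero (NeZero.ne k)
  refine ⟨fun i => (⇑ρ)^[(k - i.val) % k] c, fun i => ?_⟩
  simp only []
  have hg1 : (⇑ρ)^[(k - ((i + 1 : Fin k)).val) % k] c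
      = (⇑ρ)^[(k - (i.val + 1)) % k] c := by
    by_cases hlast : i.val + 1 = k
    · have h0 : (i + 1 : Fin k) = 0 := by
        ext
        rw [Fin.add_def]
        simp [hlast]
      rw [h0]
      have h00 : ((0 : Fin k)).val = 0 := rfl
      rw [h00, hlast]
      simp
    · have hval : ((i + 1 : Fin k)).val = i.val + 1 := by
        have hlt := i.isLt
        have hk2 : 2 ≤ k := by omega
        rw [Fin.add_def]
        simp only [Fin.val_one']
        rw [Nat.mod_eq_of_lt (show 1 < k by omega), Nat.mod_eq_of_lt (by omega)]
      rw [hval]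
  rw [hg1]
  have hiter : ρ ((⇑ρ)^[(k - (i.val + 1)) % k] c)
      = (⇑ρ)^[(k - i.val) % k + (if i.val = 0 then k else 0)] c := by
    rw [← Function.iterate_succ_apply' ρ]
    congr 1
    have hlt := i.isLt
    by_cases hi0 : i.val = 0
    · rw [if_pos hi0, hi0]
      have e1 : (k - (0 + 1)) % k = k - 1 := Nat.mod_eq_of_lt (by omega)
      have e2 : (k - 0) % k = 0 := by simp
      rw [e1, e2]
      omega
    · rw [if_neg hi0]
      have e1 : (k - (i.val + 1)) % k = k - (i.val + 1) := Nat.mod_eq_of_lt (by omega)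
      have e2 : (k - i.val) % k = k - i.val := Nat.mod_eq_of_lt (by omega)
      rw [e1, e2]
      omega
  rw [hiter]
  by_cases hi : i = 0
  · subst hi
    have h0v : ((0 : Fin k)).val = 0 := rfl
    rw [h0v]
    simp [delta, Nat.mod_self]
  · have hi0 : i.val ≠ 0 := fun h' => hi (Fin.ext h')
    simp only [delta, if_neg hi, if_neg hi0, Nat.add_zero, mul_one]
    group

private lemma rel_symm {x y : Fin k → π} (h : tupleRel ρ x y) : tupleRel ρ y x := by
  obtain ⟨g, hg⟩ := h
  refine ⟨fun i => (g i)⁻¹, fun i => ?_⟩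
  rw [hg i]
  simp [mul_assoc]

private lemma rel_trans {x y z : Fin k → π} (h1 : tupleRel ρ x y) (h2 : tupleRel ρ y z) :
    tupleRel ρ x z := by
  obtain ⟨g, hg⟩ := h1
  obtain ⟨f, hf⟩ := h2
  refine ⟨fun i => f i * g i, fun i => ?_⟩
  rw [hf i, hg i, map_mul]
  group

end Aux

theorem tupleRel_iff_twistedConj_and_quotient_bijection {π : Type*} [Group π] {k : ℕ}
    [NeZero k] (ρ : π →* π) :
    (∀ x y : Fin k → π, tupleRel ρ x y ↔ twistedConj ρ k (twistedProd ρ x) (twistedProd ρ y)) ∧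
    Function.Surjective (twistedProd ρ : (Fin k → π) → π) ∧
    ∃ e : Quot (tupleRel ρ (k := k)) ≃ Quot (twistedConj ρ k),
      ∀ x : Fin k → π,
        e (Quot.mk (tupleRel ρ) x) = Quot.mk (twistedConj ρ k) (twistedProd ρ x) := by
  have hiff : ∀ x y : Fin k → π,
      tupleRel ρ x y ↔ twistedConj ρ k (twistedProd ρ x) (twistedProd ρ y) := by
    intro x y
    constructor
    · rintro ⟨g, hg⟩
      exact ⟨g 0, fwd ρ hg⟩
    · intro h
      have h1 := rel_delta ρ x
      have h2 := delta_conj ρ h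
      have h3 := rel_symm ρ (rel_delta ρ y)
      exact rel_trans ρ (rel_trans ρ h1 h2) h3
  refine ⟨hiff, fun a => ⟨delta a, prod_delta ρ a⟩, ?_⟩
  refine ⟨{
    toFun := Quot.lift (fun x => Quot.mk _ (twistedProd ρ x))
      (fun x y h => Quot.sound ((hiff x y).1 h))
    invFun := Quot.lift (fun a => Quot.mk _ (delta a))
      (fun a b h => Quot.sound (delta_conj ρ h))
    left_inv := by
      apply Quot.ind
      intro x
      exact Quot.sound (rel_symm ρ (rel_delta ρ x))
    right_inv := by
      apply Quot.ind
      intro a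
      simp only [Quot.lift_mk]
      rw [prod_delta ρ a]
  }, fun x => rfl⟩
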